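/- (Corollary 1: EMD characterization of the indistinguishability region.) Let A be a nonempty finite set, d : A × A → ℝ nonnegative with d(a,a) = 0 for all a, and let P_0, P_1 be strictly positive PMFs on A and Δ_0, Δ_1 ≥ 0. Then min over PMFs Q on A × A with first marginal P_0 and ∑_{(a,b)} Q(a,b)·d(a,b) ≤ Δ_0 of D̃_{Δ_1}(Q_Y, P_1) equals 0 (where Q_Y is the second marginal of Q) if and only if there exists a PMF P_Y on A with EMD_d(P_0, P_Y) ≤ Δ_0 and EMD_d(P_1, P_Y) ≤ Δ_1. -/
import Mathlib


open scoped Classical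
open Finset Filter

noncomputable section

/-- A probability mass function on a finite alphabet, as a real-valued function. -/
def IsPMF {A : Type} [Fintype A] (P : A → ℝ) : Prop :=
  (∀ a, 0 ≤ P a) ∧ ∑ a, P a = 1

/-- Kullback--Leibler divergence `D(Q‖P) = ∑_{a : Q a > 0} Q a · ln (Q a / P a)`. -/
def klDiv {A : Type} [Fintype A] (Q P : A → ℝ) : ℝ :=
  ∑ a, if 0 < Q a then Q a * Real.log (Q a / P a) else 0

/-- First marginal of a joint PMF on `A × A`. -/
def margX {A : Type} [Fintype A] (Q : A × A → ℝ) : A → ℝ := fun a => ∑ b, Q (a, b)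

/-- Second marginal of a joint PMF on `A × A`. -/
def margY {A : Type} [Fintype A] (Q : A × A → ℝ) : A → ℝ := fun b => ∑ a, Q (a, b)

/-- Expected distortion of a joint PMF. -/
def expDist {A : Type} [Fintype A] (d : A → A → ℝ) (Q : A × A → ℝ) : ℝ :=
  ∑ q : A × A, Q q * d q.1 q.2

/-- Generalized divergence `D̃_Δ(P_Y, P)`: minimum of `D(Q_X‖P)` over joint PMFs `Q`
with second marginal `P_Y` and expected distortion at most `Δ`. -/
def Dtilde {A : Type} [Fintype A] (d : A → A → ℝ) (Δ : ℝ) (PY P : A → ℝ) : ℝ :=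
  sInf {v | ∃ Q : A × A → ℝ,
    IsPMF Q ∧ margY Q = PY ∧ expDist d Q ≤ Δ ∧ v = klDiv (margX Q) P}

/-- Earth mover distance between two PMFs. -/
def EMD {A : Type} [Fintype A] (d : A → A → ℝ) (P P' : A → ℝ) : ℝ :=
  sInf {v | ∃ R : A × A → ℝ,
    IsPMF R ∧ margX R = P ∧ margY R = P' ∧ v = expDist d R}

/-- Memoryless (product) probability of a sequence. -/
def seqProb {A : Type} {n : ℕ} (P : A → ℝ) (x : Fin n → A) : ℝ := ∏ i, P (x i)

/-- Additive extension of a per-letter distortion to sequences. -/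
def dSeq {A : Type} {n : ℕ} (d : A → A → ℝ) (x y : Fin n → A) : ℝ := ∑ i, d (x i) (y i)

/-- Empirical PMF (type) of a sequence. -/
def empP {A : Type} [Fintype A] [DecidableEq A] {n : ℕ} (x : Fin n → A) : A → ℝ :=
  fun a => ((univ.filter fun i => x i = a).card : ℝ) / (n : ℝ)

/-- Empirical entropy of a sequence. -/
def empEnt {A : Type} [Fintype A] [DecidableEq A] {n : ℕ} (y : Fin n → A) : ℝ :=
  -∑ a, if 0 < empP y a then empP y a * Real.log (empP y a) else 0

/-- Conditional type class `T(y|x)`. -/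
def condTypeClass {A : Type} [Fintype A] [DecidableEq A] {n : ℕ} (x y : Fin n → A) :
    Finset (Fin n → A) :=
  univ.filter fun y' => ∀ a b : A,
    (univ.filter fun i => x i = a ∧ y' i = b).card
      = (univ.filter fun i => x i = a ∧ y i = b).card

/-- Number of distinct conditional type classes `T(y|x)` arising from `y` with
`dn x y ≤ n·Δ`. -/
def numCondTypes {A : Type} [Fintype A] [DecidableEq A] {n : ℕ}
    (dn : (Fin n → A) → (Fin n → A) → ℝ) (Δ : ℝ) (x : Fin n → A) : ℕ :=
  ((univ.filter fun y => dn x y ≤ (n : ℝ) * Δ).image fun y => condTypeClass x y).card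

/-- The optimal attack channel `A*_Δ(y|x) = c_n(x)/|T(y|x)|` on admissible `y`,
and `0` otherwise; here `c_n(x)` is the reciprocal of the number of admissible
conditional type classes. -/
def Astar {A : Type} [Fintype A] [DecidableEq A] {n : ℕ}
    (dn : (Fin n → A) → (Fin n → A) → ℝ) (Δ : ℝ) (x y : Fin n → A) : ℝ :=
  if dn x y ≤ (n : ℝ) * Δ then
    ((numCondTypes dn Δ x : ℝ))⁻¹ / ((condTypeClass x y).card : ℝ)
  else 0

/-- A channel on `A^n`: `W x y` is the conditional probability of output `y` given input `x`. -/
def IsChannel {A : Type} [Fintype A] {n : ℕ}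
    (W : (Fin n → A) → (Fin n → A) → ℝ) : Prop :=
  (∀ x y, 0 ≤ W x y) ∧ ∀ x, ∑ y, W x y = 1

/-- The class `C_Δ` of admissible channels: those assigning zero probability to any
`y` with `dn x y > n·Δ`. -/
def InC {A : Type} [Fintype A] {n : ℕ}
    (dn : (Fin n → A) → (Fin n → A) → ℝ) (Δ : ℝ)
    (W : (Fin n → A) → (Fin n → A) → ℝ) : Prop :=
  IsChannel W ∧ ∀ x y, (n : ℝ) * Δ < dn x y → W x y = 0

/-- False positive probability: `Φ y` is the probability of deciding `H₁` given `y`. -/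
def PFP {A : Type} [Fintype A] {n : ℕ} (P0 : A → ℝ) (Φ : (Fin n → A) → ℝ)
    (A0 : (Fin n → A) → (Fin n → A) → ℝ) : ℝ :=
  ∑ x, ∑ y, seqProb P0 x * A0 x y * Φ y

/-- False negative probability. -/
def PFN {A : Type} [Fintype A] {n : ℕ} (P1 : A → ℝ) (Φ : (Fin n → A) → ℝ)
    (A1 : (Fin n → A) → (Fin n → A) → ℝ) : ℝ :=
  ∑ x, ∑ y, seqProb P1 x * A1 x y * (1 - Φ y)

/-- Sequence-level generalized divergence
`D̃ⁿ_Δ(y,P) = min_{x : d(x,y) ≤ nΔ} D(P̂_x‖P)`. -/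
def DtildeN {A : Type} [Fintype A] [DecidableEq A] {n : ℕ} (d : A → A → ℝ) (Δ : ℝ)
    (y : Fin n → A) (P : A → ℝ) : ℝ :=
  sInf {v | ∃ x : Fin n → A, dSeq d x y ≤ (n : ℝ) * Δ ∧ v = klDiv (empP x) P}

section IndistAux

variable {A : Type} [Fintype A]

lemma sum_margX (Q : A × A → ℝ) : ∑ a, margX Q a = ∑ q : A × A, Q q := by
  unfold margX; rw [Fintype.sum_prod_type]

lemma sum_margY (Q : A × A → ℝ) : ∑ b, margY Q b = ∑ q : A × A, Q q := by
  unfold margY; rw [Fintype.sum_prod_type]; exact Finset.sum_comm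

lemma margX_pmf {Q : A × A → ℝ} (hQ : IsPMF Q) : IsPMF (margX Q) :=
  ⟨fun a => Finset.sum_nonneg fun b _ => hQ.1 (a, b), by rw [sum_margX]; exact hQ.2⟩

lemma margY_pmf {Q : A × A → ℝ} (hQ : IsPMF Q) : IsPMF (margY Q) :=
  ⟨fun b => Finset.sum_nonneg fun a _ => hQ.1 (a, b), by rw [sum_margY]; exact hQ.2⟩

lemma klDiv_self {P : A → ℝ} : klDiv P P = 0 := by
  unfold klDiv
  apply Finset.sum_eq_zero
  intro a _
  split
  · rename_i h
    rw [div_self (ne_of_gt h), Real.log_one, mul_zero]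
  · rfl

lemma klDiv_term_ge {Q P : A → ℝ} (hPpos : ∀ a, 0 < P a) (a : A) :
    (if 0 < Q a then Q a - P a else 0) ≤ (if 0 < Q a then Q a * Real.log (Q a / P a) else 0) := by
  by_cases h : 0 < Q a
  · simp only [if_pos h]
    have h1 : 0 < P a / Q a := div_pos (hPpos a) h
    have h2 := Real.log_le_sub_one_of_pos h1
    have h3 : Real.log (Q a / P a) = - Real.log (P a / Q a) := by
      rw [← Real.log_inv, inv_div]
    have h4 : Q a * Real.log (P a / Q a) ≤ P a - Q a := by
      calc Q a * Real.log (P a / Q a) ≤ Q a * (P a / Q a - 1) :=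
            mul_le_mul_of_nonneg_left h2 h.le
        _ = P a - Q a := by field_simp
    rw [h3, mul_neg]; linarith
  · simp [h]

lemma klDiv_support_sums {Q P : A → ℝ} (hQ : IsPMF Q) (hP : IsPMF P) (hPpos : ∀ a, 0 < P a) :
    (∑ a, (if 0 < Q a then Q a else 0) = 1) ∧ (∑ a, (if 0 < Q a then P a else 0) ≤ 1)
      ∧ (∑ a, (if 0 < Q a then Q a - P a else 0)
          = (∑ a, if 0 < Q a then Q a else 0) - ∑ a, if 0 < Q a then P a else 0) := by
  refine ⟨?_, ?_, ?_⟩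
  · rw [← hQ.2]
    apply Finset.sum_congr rfl
    intro a _
    by_cases h : 0 < Q a
    · simp [h]
    · simp [h, le_antisymm (not_lt.mp h) (hQ.1 a)]
  · rw [← hP.2]
    apply Finset.sum_le_sum
    intro a _
    split
    · exact le_rfl
    · exact (hPpos a).le
  · rw [← Finset.sum_sub_distrib]
    apply Finset.sum_congr rfl
    intro a _
    split <;> ring

lemma klDiv_nonneg {Q P : A → ℝ} (hQ : IsPMF Q) (hP : IsPMF P) (hPpos : ∀ a, 0 < P a) :
    0 ≤ klDiv Q P := by
  obtain ⟨e1, e2, e3⟩ := klDiv_support_sums hQ hP hPpos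
  have hsum : ∑ a, (if 0 < Q a then Q a - P a else 0) ≤ klDiv Q P :=
    Finset.sum_le_sum fun a _ => klDiv_term_ge hPpos a
  linarith

lemma klDiv_eq_zero {Q P : A → ℝ} (hQ : IsPMF Q) (hP : IsPMF P) (hPpos : ∀ a, 0 < P a)
    (h : klDiv Q P = 0) : Q = P := by
  obtain ⟨e1, e2, e3⟩ := klDiv_support_sums hQ hP hPpos
  -- slack per term
  set g : A → ℝ := fun a =>
    (if 0 < Q a then Q a * Real.log (Q a / P a) else 0) - (if 0 < Q a then Q a - P a else 0)
    with hg
  have hgnn : ∀ a ∈ Finset.univ, (0:ℝ) ≤ g a := fun a _ =>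
    sub_nonneg.mpr (klDiv_term_ge hPpos a)
  have hgsumval : ∑ a, g a = klDiv Q P - ∑ a, (if 0 < Q a then Q a - P a else 0) := by
    unfold g; unfold klDiv; rw [← Finset.sum_sub_distrib]
  have hlow : (0:ℝ) ≤ ∑ a, g a := Finset.sum_nonneg hgnn
  -- From 0 ≤ ∑ g = 0 - (1 - s): s ≥ 1, and s ≤ 1, so s = 1.
  have hs1 : ∑ a, (if 0 < Q a then P a else 0) = 1 := by
    rw [hgsumval, h, e3, e1] at hlow; linarith
  -- termwise equality forces Q a > 0 everywhere
  have hQpos : ∀ a, 0 < Q a := by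
    have hle : ∀ a ∈ Finset.univ, (if 0 < Q a then P a else 0) ≤ P a := by
      intro a _
      split
      · exact le_rfl
      · exact (hPpos a).le
    have heq : ∑ a, (if 0 < Q a then P a else 0) = ∑ a, P a := by rw [hs1, hP.2]
    have := (Finset.sum_eq_sum_iff_of_le hle).mp heq
    intro a
    have ha := this a (Finset.mem_univ a)
    by_contra hh
    rw [if_neg hh] at ha
    exact absurd ha.symm (ne_of_gt (hPpos a))
  -- each slack term is zero
  have hgsum0 : ∑ a, g a = 0 := by
    rw [hgsumval, h, e3, e1, hs1]; ring
  have hgz := (Finset.sum_eq_zero_iff_of_nonneg hgnn).mp hgsum0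
  funext a
  have ha := hgz a (Finset.mem_univ a)
  rw [hg] at ha
  simp only [if_pos (hQpos a)] at ha
  have heq : Q a * Real.log (Q a / P a) = Q a - P a := by linarith [sub_eq_zero.mp ha]
  by_contra hne
  have h1 : 0 < P a / Q a := div_pos (hPpos a) (hQpos a)
  have hne1 : P a / Q a ≠ 1 := by
    intro hc
    exact hne ((div_eq_one_iff_eq (ne_of_gt (hQpos a))).mp hc).symm
  have h2 := Real.log_lt_sub_one_of_pos h1 hne1
  have h3 : Real.log (Q a / P a) = - Real.log (P a / Q a) := by
    rw [← Real.log_inv, inv_div]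
  have h4 : Q a * Real.log (P a / Q a) < P a - Q a := by
    calc Q a * Real.log (P a / Q a) < Q a * (P a / Q a - 1) :=
          (mul_lt_mul_iff_right₀ (hQpos a)).mpr h2
      _ = P a - Q a := by field_simp [ne_of_gt (hQpos a)]
  rw [h3, mul_neg] at heq
  linarith

end IndistAux
section IndistAux2

variable {A : Type} [Fintype A]

/-- Diagonal coupling. -/
def diagC (P : A → ℝ) : A × A → ℝ := fun q => if q.1 = q.2 then P q.1 else 0

lemma diagC_margX (P : A → ℝ) : margX (diagC P) = P := by
  funext a
  simp [margX, diagC, Finset.sum_ite_eq]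

lemma diagC_margY (P : A → ℝ) : margY (diagC P) = P := by
  funext b
  unfold margY diagC
  rw [Finset.sum_congr rfl (fun a _ => show (if a = b then P a else 0) = if a = b then P b else 0
    by split <;> simp_all)]
  simp [Finset.sum_ite_eq']

lemma diagC_pmf {P : A → ℝ} (hP : IsPMF P) : IsPMF (diagC P) := by
  constructor
  · rintro ⟨a, b⟩
    by_cases h : a = b <;> simp [diagC, h, hP.1 a, hP.1 b]
  · rw [← sum_margX, diagC_margX]; exact hP.2

lemma diagC_expDist (d : A → A → ℝ) (hdrefl : ∀ a, d a a = 0) (P : A → ℝ) :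
    expDist d (diagC P) = 0 := by
  apply Finset.sum_eq_zero
  rintro ⟨a, b⟩ _
  by_cases h : a = b
  · subst h; simp [diagC, hdrefl a]
  · simp [diagC, h]

/-- Product coupling. -/
def prodC (P P' : A → ℝ) : A × A → ℝ := fun q => P q.1 * P' q.2

lemma prodC_margX {P P' : A → ℝ} (hP' : IsPMF P') : margX (prodC P P') = P := by
  funext a
  simp [margX, prodC, ← Finset.mul_sum, hP'.2]

lemma prodC_margY {P P' : A → ℝ} (hP : IsPMF P) : margY (prodC P P') = P' := by
  funext b
  simp [margY, prodC, ← Finset.sum_mul, hP.2]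

lemma prodC_pmf {P P' : A → ℝ} (hP : IsPMF P) (hP' : IsPMF P') : IsPMF (prodC P P') := by
  constructor
  · rintro ⟨a, b⟩; exact mul_nonneg (hP.1 a) (hP'.1 b)
  · rw [← sum_margX, prodC_margX hP']; exact hP.2

lemma expDist_nonneg {d : A → A → ℝ} (hd : ∀ a b, 0 ≤ d a b) {R : A × A → ℝ}
    (hR : ∀ q, 0 ≤ R q) : 0 ≤ expDist d R :=
  Finset.sum_nonneg fun q _ => mul_nonneg (hR q) (hd q.1 q.2)

-- continuity facts
lemma continuous_margX_apply (a : A) : Continuous fun R : A × A → ℝ => margX R a :=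
  continuous_finset_sum _ fun b _ => continuous_apply (a, b)

lemma continuous_margY_apply (b : A) : Continuous fun R : A × A → ℝ => margY R b :=
  continuous_finset_sum _ fun a _ => continuous_apply (a, b)

lemma continuous_expDist (d : A → A → ℝ) : Continuous fun R : A × A → ℝ => expDist d R :=
  continuous_finset_sum _ fun q _ => (continuous_apply q).mul continuous_const

lemma continuous_totalSum : Continuous fun R : A × A → ℝ => ∑ q, R q :=
  continuous_finset_sum _ fun q _ => continuous_apply q

lemma isClosed_pmfSet : IsClosed {R : A × A → ℝ | IsPMF R} := by
  have h : {R : A × A → ℝ | IsPMF R}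
      = (⋂ q, {R : A × A → ℝ | 0 ≤ R q}) ∩ {R | ∑ q, R q = 1} := by
    ext R; simp [IsPMF, Set.mem_iInter]
  rw [h]
  exact (isClosed_iInter fun q =>
      isClosed_le continuous_const (continuous_apply q)).inter
    (isClosed_eq continuous_totalSum continuous_const)

lemma pmf_mem_Icc {R : A × A → ℝ} (hR : IsPMF R) : R ∈ Set.Icc (0 : A × A → ℝ) 1 := by
  constructor
  · intro q; exact hR.1 q
  · intro q
    show R q ≤ 1
    rw [← hR.2]
    exact Finset.single_le_sum (fun i _ => hR.1 i) (Finset.mem_univ q)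

lemma isCompact_of_pmf_subset {S : Set (A × A → ℝ)} (hcl : IsClosed S)
    (hsub : ∀ R ∈ S, IsPMF R) : IsCompact S :=
  IsCompact.of_isClosed_subset isCompact_Icc hcl fun R hR => pmf_mem_Icc (hsub R hR)

/-- Attainment of the earth-mover distance. -/
lemma emd_attained (d : A → A → ℝ) (hd : ∀ a b, 0 ≤ d a b) {P P' : A → ℝ}
    (hP : IsPMF P) (hP' : IsPMF P') :
    ∃ R : A × A → ℝ, IsPMF R ∧ margX R = P ∧ margY R = P' ∧ expDist d R = EMD d P P' := by
  set C : Set (A × A → ℝ) := {R | IsPMF R ∧ margX R = P ∧ margY R = P'} with hC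
  have hclosed : IsClosed C := by
    have h : C = {R : A × A → ℝ | IsPMF R}
        ∩ ((⋂ a, {R : A × A → ℝ | margX R a = P a}) ∩ ⋂ b, {R | margY R b = P' b}) := by
      ext R
      simp only [hC, Set.mem_setOf_eq, Set.mem_inter_iff, Set.mem_iInter, funext_iff]
    rw [h]
    exact isClosed_pmfSet.inter
      ((isClosed_iInter fun a => isClosed_eq (continuous_margX_apply a) continuous_const).inter
        (isClosed_iInter fun b => isClosed_eq (continuous_margY_apply b) continuous_const))
  have hcomp : IsCompact C := isCompact_of_pmf_subset hclosed fun R hR => hR.1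
  have hne : C.Nonempty := ⟨prodC P P', prodC_pmf hP hP', prodC_margX hP', prodC_margY hP⟩
  obtain ⟨R, hRC, hRmin'⟩ := hcomp.exists_isMinOn hne (continuous_expDist d).continuousOn
  have hRmin := isMinOn_iff.mp hRmin'
  refine ⟨R, hRC.1, hRC.2.1, hRC.2.2, ?_⟩
  apply le_antisymm
  · refine le_csInf ⟨expDist d R, R, hRC.1, hRC.2.1, hRC.2.2, rfl⟩ ?_
    rintro v ⟨R', h1, h2, h3, rfl⟩
    exact hRmin R' ⟨h1, h2, h3⟩
  · apply csInf_le
    · refine ⟨0, ?_⟩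
      rintro v ⟨R', h1, _, _, rfl⟩
      exact expDist_nonneg hd h1.1
    · exact ⟨R, hRC.1, hRC.2.1, hRC.2.2, rfl⟩

lemma kl_term_eq {t c : ℝ} (ht : 0 ≤ t) (hc : 0 < c) :
    (if 0 < t then t * Real.log (t / c) else 0) = t * Real.log t - t * Real.log c := by
  rcases eq_or_lt_of_le ht with h | h
  · simp [← h]
  · rw [if_pos h, Real.log_div (ne_of_gt h) (ne_of_gt hc)]; ring

lemma klDiv_eq_smooth {Q P : A → ℝ} (hQ : ∀ a, 0 ≤ Q a) (hPpos : ∀ a, 0 < P a) :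
    klDiv Q P = ∑ a, (Q a * Real.log (Q a) - Q a * Real.log (P a)) :=
  Finset.sum_congr rfl fun a _ => kl_term_eq (hQ a) (hPpos a)

end IndistAux2
/-- Corollary 1: EMD characterization of the indistinguishability region. -/
theorem indistinguishability_emd
    {A : Type} [Fintype A] [Nonempty A]
    (d : A → A → ℝ) (hd : ∀ a b, 0 ≤ d a b) (hdrefl : ∀ a, d a a = 0)
    (P0 P1 : A → ℝ) (hP0 : IsPMF P0) (hP1 : IsPMF P1)
    (hP0pos : ∀ a, 0 < P0 a) (hP1pos : ∀ a, 0 < P1 a)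
    (Δ0 Δ1 : ℝ) (hΔ0 : 0 ≤ Δ0) (hΔ1 : 0 ≤ Δ1) :
    sInf {v | ∃ Q : A × A → ℝ,
        IsPMF Q ∧ margX Q = P0 ∧ expDist d Q ≤ Δ0 ∧ v = Dtilde d Δ1 (margY Q) P1} = 0
      ↔ ∃ PY : A → ℝ, IsPMF PY ∧ EMD d P0 PY ≤ Δ0 ∧ EMD d P1 PY ≤ Δ1 := by
  -- Basic facts about the Dtilde sets.
  have dt_lb : ∀ PY : A → ℝ, ∀ v ∈ {v | ∃ Q : A × A → ℝ,
      IsPMF Q ∧ margY Q = PY ∧ expDist d Q ≤ Δ1 ∧ v = klDiv (margX Q) P1}, (0:ℝ) ≤ v := by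
    rintro PY v ⟨Q, hQ, _, _, rfl⟩
    exact klDiv_nonneg (margX_pmf hQ) hP1 hP1pos
  have dt_ne : ∀ PY : A → ℝ, IsPMF PY → Set.Nonempty {v | ∃ Q : A × A → ℝ,
      IsPMF Q ∧ margY Q = PY ∧ expDist d Q ≤ Δ1 ∧ v = klDiv (margX Q) P1} := by
    intro PY hPY
    exact ⟨klDiv (margX (diagC PY)) P1, diagC PY, diagC_pmf hPY, diagC_margY PY,
      le_of_eq_of_le (diagC_expDist d hdrefl PY) hΔ1, rfl⟩
  have dt_nonneg : ∀ PY : A → ℝ, IsPMF PY → 0 ≤ Dtilde d Δ1 PY P1 := fun PY hPY =>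
    le_csInf (dt_ne PY hPY) (dt_lb PY)
  -- Facts about the outer set.
  set Outer : Set ℝ := {v | ∃ Q : A × A → ℝ,
      IsPMF Q ∧ margX Q = P0 ∧ expDist d Q ≤ Δ0 ∧ v = Dtilde d Δ1 (margY Q) P1} with hOuter
  have outer_lb : ∀ v ∈ Outer, (0:ℝ) ≤ v := by
    rintro v ⟨Q, hQ, _, _, rfl⟩
    exact dt_nonneg _ (margY_pmf hQ)
  have outer_ne : Outer.Nonempty :=
    ⟨Dtilde d Δ1 (margY (diagC P0)) P1, diagC P0, diagC_pmf hP0, diagC_margX P0,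
      le_of_eq_of_le (diagC_expDist d hdrefl P0) hΔ0, rfl⟩
  have emd_lb : ∀ P P' : A → ℝ, ∀ v ∈ {v | ∃ R : A × A → ℝ,
      IsPMF R ∧ margX R = P ∧ margY R = P' ∧ v = expDist d R}, (0:ℝ) ≤ v := by
    rintro P P' v ⟨R, hR, _, _, rfl⟩
    exact expDist_nonneg hd hR.1
  constructor
  · -- forward direction via compactness
    intro h0
    set S : Set ((A × A → ℝ) × (A × A → ℝ)) :=
      {p | (IsPMF p.1 ∧ margX p.1 = P0 ∧ expDist d p.1 ≤ Δ0)
        ∧ (IsPMF p.2 ∧ margY p.2 = margY p.1 ∧ expDist d p.2 ≤ Δ1)} with hS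
    have hSclosed : IsClosed S := by
      have h : S = ({p : (A × A → ℝ) × (A × A → ℝ) | IsPMF p.1}
            ∩ ((⋂ a, {p : (A × A → ℝ) × (A × A → ℝ) | margX p.1 a = P0 a})
            ∩ {p : (A × A → ℝ) × (A × A → ℝ) | expDist d p.1 ≤ Δ0}))
          ∩ ({p : (A × A → ℝ) × (A × A → ℝ) | IsPMF p.2}
            ∩ ((⋂ b, {p : (A × A → ℝ) × (A × A → ℝ) | margY p.2 b = margY p.1 b})
            ∩ {p : (A × A → ℝ) × (A × A → ℝ) | expDist d p.2 ≤ Δ1})) := by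
        ext p
        simp only [hS, Set.mem_setOf_eq, Set.mem_inter_iff, Set.mem_iInter, funext_iff]
      rw [h]
      refine IsClosed.inter (IsClosed.inter ?_ (IsClosed.inter ?_ ?_))
        (IsClosed.inter ?_ (IsClosed.inter ?_ ?_))
      · exact isClosed_pmfSet.preimage continuous_fst
      · exact isClosed_iInter fun a =>
          isClosed_eq ((continuous_margX_apply a).comp continuous_fst) continuous_const
      · exact isClosed_le ((continuous_expDist d).comp continuous_fst) continuous_const
      · exact isClosed_pmfSet.preimage continuous_snd
      · exact isClosed_iInter fun b =>
          isClosed_eq ((continuous_margY_apply b).comp continuous_snd)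
            ((continuous_margY_apply b).comp continuous_fst)
      · exact isClosed_le ((continuous_expDist d).comp continuous_snd) continuous_const
    have hScomp : IsCompact S := by
      refine IsCompact.of_isClosed_subset
        ((isCompact_Icc (a := (0 : A × A → ℝ)) (b := 1)).prod
          (isCompact_Icc (a := (0 : A × A → ℝ)) (b := 1))) hSclosed ?_
      rintro p ⟨⟨h1, _, _⟩, ⟨h2, _, _⟩⟩
      exact ⟨pmf_mem_Icc h1, pmf_mem_Icc h2⟩
    have hSne : S.Nonempty := by
      refine ⟨(diagC P0, diagC P0), ⟨diagC_pmf hP0, diagC_margX P0,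
        le_of_eq_of_le (diagC_expDist d hdrefl P0) hΔ0⟩,
        diagC_pmf hP0, rfl, le_of_eq_of_le (diagC_expDist d hdrefl P0) hΔ1⟩
    -- the objective function and its continuity on S
    set F : ((A × A → ℝ) × (A × A → ℝ)) → ℝ := fun p => klDiv (margX p.2) P1 with hF
    have hFcont : ContinuousOn F S := by
      have hG : Continuous fun p : (A × A → ℝ) × (A × A → ℝ) =>
          ∑ a, (margX p.2 a * Real.log (margX p.2 a) - margX p.2 a * Real.log (P1 a)) := by
        refine continuous_finset_sum _ fun a _ => ?_
        have hm : Continuous fun p : (A × A → ℝ) × (A × A → ℝ) => margX p.2 a :=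
          (continuous_margX_apply a).comp continuous_snd
        exact (Real.continuous_mul_log.comp hm).sub (hm.mul continuous_const)
      refine hG.continuousOn.congr ?_
      rintro p ⟨_, hp2, _, _⟩
      exact klDiv_eq_smooth (fun a => (margX_pmf hp2).1 a) hP1pos
    obtain ⟨p, hpS, hpmin'⟩ := hScomp.exists_isMinOn hSne hFcont
    have hpmin := isMinOn_iff.mp hpmin'
    obtain ⟨⟨hp1, hp1X, hp1d⟩, hp2, hp2Y, hp2d⟩ := hpS
    -- the minimum equals the outer infimum, which is 0
    have h1 : F p ≤ sInf Outer := by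
      refine le_csInf outer_ne ?_
      rintro v ⟨Q, hQ, hQX, hQd, rfl⟩
      refine le_csInf (dt_ne _ (margY_pmf hQ)) ?_
      rintro w ⟨R, hR, hRY, hRd, rfl⟩
      exact hpmin (Q, R) ⟨⟨hQ, hQX, hQd⟩, hR, hRY, hRd⟩
    have h2 : Dtilde d Δ1 (margY p.1) P1 ≤ F p :=
      csInf_le ⟨0, dt_lb (margY p.1)⟩ ⟨p.2, hp2, hp2Y, hp2d, rfl⟩
    have h3 : sInf Outer ≤ Dtilde d Δ1 (margY p.1) P1 :=
      csInf_le ⟨0, outer_lb⟩ ⟨p.1, hp1, hp1X, hp1d, rfl⟩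
    rw [h0] at h1 h3
    have hF0 : F p = 0 := le_antisymm h1 (klDiv_nonneg (margX_pmf hp2) hP1 hP1pos)
    have hp2X : margX p.2 = P1 := klDiv_eq_zero (margX_pmf hp2) hP1 hP1pos hF0
    refine ⟨margY p.1, margY_pmf hp1, ?_, ?_⟩
    · calc EMD d P0 (margY p.1) ≤ expDist d p.1 :=
            csInf_le ⟨0, emd_lb P0 (margY p.1)⟩ ⟨p.1, hp1, hp1X, rfl, rfl⟩
        _ ≤ Δ0 := hp1d
    · calc EMD d P1 (margY p.1) ≤ expDist d p.2 :=
            csInf_le ⟨0, emd_lb P1 (margY p.1)⟩ ⟨p.2, hp2, hp2X, hp2Y, rfl⟩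
        _ ≤ Δ1 := hp2d
  · -- backward direction via EMD attainment
    rintro ⟨PY, hPY, hE0, hE1⟩
    obtain ⟨R0, hR0, hR0X, hR0Y, hR0e⟩ := emd_attained d hd hP0 hPY
    obtain ⟨R1, hR1, hR1X, hR1Y, hR1e⟩ := emd_attained d hd hP1 hPY
    have hR0d : expDist d R0 ≤ Δ0 := by rw [hR0e]; exact hE0
    have hR1d : expDist d R1 ≤ Δ1 := by rw [hR1e]; exact hE1
    have hDt0 : Dtilde d Δ1 PY P1 = 0 := by
      refine le_antisymm ?_ (dt_nonneg PY hPY)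
      have : (0:ℝ) ∈ {v | ∃ Q : A × A → ℝ,
          IsPMF Q ∧ margY Q = PY ∧ expDist d Q ≤ Δ1 ∧ v = klDiv (margX Q) P1} :=
        ⟨R1, hR1, hR1Y, hR1d, by rw [hR1X, klDiv_self]⟩
      exact csInf_le ⟨0, dt_lb PY⟩ this
    refine le_antisymm ?_ (le_csInf outer_ne outer_lb)
    refine csInf_le ⟨0, outer_lb⟩ ?_
    exact ⟨R0, hR0, hR0X, hR0d, by rw [hR0Y, hDt0]⟩
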